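/- For every integer R ≥ 2, the density of coprime R-tuples converges to 1/ζ(R): namely, |{(c₁,…,c_R) ∈ {1,…,M}^R : gcd(c₁,…,c_R) = 1}| / M^R → 1/ζ(R) as M → ∞, where ζ denotes the Riemann zeta function. -/

import Mathlib

open Filter Finset ArithmeticFunction Topology
open scoped ArithmeticFunction.Moebius

lemma aux_sum_moebius_divisors (g : ℕ) :
    (∑ e ∈ g.divisors, (μ e : ℤ)) = if g = 1 then 1 else 0 := by
  rw [← coe_mul_zeta_apply (f := (μ : ArithmeticFunction ℤ)), moebius_mul_coe_zeta, one_apply]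

lemma aux_count (R M : ℕ) (hR : 0 < R) :
    ((((Fintype.piFinset (fun _ : Fin R => Finset.Icc 1 M)).filter
        (fun c => Finset.univ.gcd c = 1)).card : ℤ)) =
    ∑ d ∈ Finset.Icc 1 M, (μ d : ℤ) * ((M / d : ℕ) : ℤ) ^ R := by
  classical
  have : Fact (0 < R) := ⟨hR⟩
  have i0 : Fin R := ⟨0, hR⟩
  have hdiv : ∀ c ∈ Fintype.piFinset (fun _ : Fin R => Finset.Icc 1 M),
      (Finset.univ.gcd c).divisors = (Finset.Icc 1 M).filter (· ∣ Finset.univ.gcd c) := by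
    intro c hc
    have hci : ∀ i, 1 ≤ c i ∧ c i ≤ M := fun i => by
      simpa [Finset.mem_Icc] using Fintype.mem_piFinset.mp hc i
    have hg0 : Finset.univ.gcd c ≠ 0 := by
      intro h
      have := Finset.gcd_dvd (f := c) (Finset.mem_univ i0)
      rw [h] at this
      have h2 := Nat.eq_zero_of_zero_dvd this
      have h3 := (hci i0).1
      omega
    have hgM : Finset.univ.gcd c ≤ M := by
      have h1 := Finset.gcd_dvd (f := c) (Finset.mem_univ i0)
      have := Nat.le_of_dvd (by have := (hci i0).1; omega) h1
      have := (hci i0).2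
      omega
    ext e
    simp only [Nat.mem_divisors, Finset.mem_filter, Finset.mem_Icc]
    constructor
    · rintro ⟨he, -⟩
      have he0 : e ≠ 0 := by
        rintro rfl
        exact hg0 (Nat.eq_zero_of_zero_dvd he)
      exact ⟨⟨by omega, le_trans (Nat.le_of_dvd (Nat.pos_of_ne_zero hg0) he) hgM⟩, he⟩
    · rintro ⟨-, he⟩
      exact ⟨he, hg0⟩
  rw [Finset.card_filter]
  push_cast
  calc (∑ c ∈ Fintype.piFinset (fun _ : Fin R => Finset.Icc 1 M),
        if Finset.univ.gcd c = 1 then (1:ℤ) else 0)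
      = ∑ c ∈ Fintype.piFinset (fun _ : Fin R => Finset.Icc 1 M),
          ∑ e ∈ Finset.Icc 1 M, (if e ∣ Finset.univ.gcd c then (μ e : ℤ) else 0) := by
        refine Finset.sum_congr rfl fun c hc => ?_
        rw [← Finset.sum_filter, ← hdiv c hc, aux_sum_moebius_divisors]
    _ = ∑ e ∈ Finset.Icc 1 M, ∑ c ∈ Fintype.piFinset (fun _ : Fin R => Finset.Icc 1 M),
          (if e ∣ Finset.univ.gcd c then (μ e : ℤ) else 0) := Finset.sum_comm
    _ = ∑ e ∈ Finset.Icc 1 M, (μ e : ℤ) * ((M / e : ℕ) : ℤ) ^ R := by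
        refine Finset.sum_congr rfl fun e _ => ?_
        rw [← Finset.sum_filter, Finset.sum_const]
        have hfe : (Fintype.piFinset (fun _ : Fin R => Finset.Icc 1 M)).filter
            (fun c => e ∣ Finset.univ.gcd c)
            = Fintype.piFinset (fun _ : Fin R => (Finset.Icc 1 M).filter (e ∣ ·)) := by
          ext c
          simp only [Finset.mem_filter, Fintype.mem_piFinset, Finset.dvd_gcd_iff,
            Finset.mem_univ, forall_true_left]
          exact ⟨fun h i => ⟨h.1 i, h.2 i⟩, fun h => ⟨fun i => (h i).1, fun i => (h i).2⟩⟩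
        rw [hfe, Fintype.card_piFinset]
        have hcard : ((Finset.Icc 1 M).filter (e ∣ ·)).card = M / e := by
          have h1 : Finset.Icc 1 M = Finset.Ioc 0 M := rfl
          rw [h1]
          exact Nat.Ioc_filter_dvd_card_eq_div M e
        simp [hcard, mul_comm]

/- STATEMENT 7: For every integer `R ≥ 2`, the density of coprime `R`-tuples with entries in
`{1,…,M}` converges, as `M → ∞`, to `1/ζ(R)` where `ζ` is the Riemann zeta function. -/
theorem stmt7 (R : ℕ) (hR : 2 ≤ R) :
    Filter.Tendsto
      (fun M : ℕ =>
        ((((Fintype.piFinset (fun _ : Fin R => Finset.Icc 1 M)).filter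
              (fun c => Finset.univ.gcd c = 1)).card : ℂ) / (M : ℂ) ^ R))
      Filter.atTop (nhds (1 / riemannZeta R)) := by
  have hR0 : 0 < R := by omega
  have hRre : 1 < ((R : ℕ) : ℂ).re := by
    rw [Complex.natCast_re]
    exact_mod_cast lt_of_lt_of_le one_lt_two (by exact_mod_cast hR)
  -- the limit is the L-series of the Möbius function
  have hzeta : (1 : ℂ) / riemannZeta R
      = ∑' d, LSeries.term (fun n => ((μ n : ℤ) : ℂ)) R d := by
    have h1 := LSeries_one_mul_Lseries_moebius hRre
    rw [LSeries_one_eq_riemannZeta hRre] at h1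
    rw [← eq_one_div_of_mul_eq_one_left (by rw [mul_comm]; exact h1)]
    rfl
  rw [hzeta]
  set F : ℕ → ℕ → ℂ := fun M d =>
    if d ∈ Finset.Icc 1 M then ((μ d : ℤ) : ℂ) * ((M / d : ℕ) : ℂ) ^ R / (M : ℂ) ^ R else 0
    with hF
  have key : Tendsto (fun M => ∑' d, F M d) atTop
      (𝓝 (∑' d, LSeries.term (fun n => ((μ n : ℤ) : ℂ)) R d)) := by
    apply tendsto_tsum_of_dominated_convergence (bound := fun d : ℕ => 1 / (d : ℝ) ^ R)
    · exact (Real.summable_one_div_nat_pow).mpr (lt_of_lt_of_le one_lt_two hR)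
    · intro d
      rcases Nat.eq_zero_or_pos d with rfl | hd
      · have : ∀ M, F M 0 = 0 := fun M => by simp [hF]
        simp only [this, LSeries.term_zero]
        exact tendsto_const_nhds
      · -- d ≥ 1
        have hx : Tendsto (fun M : ℕ => ((M / d : ℕ) : ℝ) / (M : ℝ)) atTop (𝓝 (1 / d)) := by
          have h0 : Tendsto (fun M : ℕ => ((M % d : ℕ) : ℝ) / ((d : ℝ) * M)) atTop (𝓝 0) := by
            apply squeeze_zero (fun M => by positivity) (fun M => ?_)
              tendsto_one_div_atTop_nhds_zero_nat
            rcases Nat.eq_zero_or_pos M with rfl | hM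
            · simp
            · have h1 : ((M % d : ℕ) : ℝ) ≤ d := by
                exact_mod_cast (Nat.mod_lt M hd).le
              have h2 : ((M % d : ℕ) : ℝ) / ((d : ℝ) * M) ≤ (d : ℝ) / ((d : ℝ) * M) := by
                gcongr
              have h3 : (d : ℝ) / ((d : ℝ) * M) = 1 / M := by
                rw [← div_div, div_self (show (d : ℝ) ≠ 0 by positivity)]
              rw [h3] at h2; exact h2
          have heq : ∀ᶠ M : ℕ in atTop,
              1 / (d : ℝ) - ((M % d : ℕ) : ℝ) / ((d : ℝ) * M) = ((M / d : ℕ) : ℝ) / (M : ℝ) := by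
            filter_upwards [eventually_ge_atTop 1] with M hM
            have hM0 : (M : ℝ) ≠ 0 := by positivity
            have hd0 : (d : ℝ) ≠ 0 := by positivity
            have hdm : ((M / d : ℕ) : ℝ) * d = (M : ℝ) - ((M % d : ℕ) : ℝ) := by
              have := Nat.div_add_mod M d
              have : (d * (M / d) + M % d : ℕ) = (M : ℕ) := this
              have h := congrArg (fun n : ℕ => (n : ℝ)) this
              push_cast at h
              linarith
            field_simp
            ring_nf
            nlinarith [hdm]
          refine Tendsto.congr' heq ?_
          simpa using tendsto_const_nhds.sub h0
        have hc : Tendsto (fun M : ℕ =>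
            ((μ d : ℤ) : ℂ) * (((((M / d : ℕ) : ℝ) / (M : ℝ)) : ℝ) : ℂ) ^ R) atTop
            (𝓝 (((μ d : ℤ) : ℂ) * (((1 / (d : ℝ)) : ℝ) : ℂ) ^ R)) :=
          tendsto_const_nhds.mul (((Complex.continuous_ofReal.tendsto _).comp hx).pow R)
        have hlim : ((μ d : ℤ) : ℂ) * (((1 / (d : ℝ)) : ℝ) : ℂ) ^ R
            = LSeries.term (fun n => ((μ n : ℤ) : ℂ)) R d := by
          rw [LSeries.term_of_ne_zero (by omega)]
          push_cast
          rw [Complex.cpow_natCast]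
          rw [div_pow, one_pow, mul_one_div]
        rw [← hlim]
        refine Tendsto.congr' ?_ hc
        filter_upwards [eventually_ge_atTop d] with M hM
        have hM1 : 1 ≤ M := le_trans hd hM
        have hmem : d ∈ Finset.Icc 1 M := Finset.mem_Icc.mpr ⟨hd, hM⟩
        simp only [hF, if_pos hmem]
        push_cast
        rw [div_pow, mul_div_assoc]
    · filter_upwards with M
      intro d
      by_cases hmem : d ∈ Finset.Icc 1 M
      · have hd : 1 ≤ d := (Finset.mem_Icc.mp hmem).1
        have hdM : d ≤ M := (Finset.mem_Icc.mp hmem).2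
        simp only [hF, if_pos hmem]
        rw [norm_div, norm_mul, norm_pow, norm_pow, Complex.norm_natCast, Complex.norm_natCast]
        have hmu : ‖((μ d : ℤ) : ℂ)‖ ≤ 1 := by
          rw [Complex.norm_intCast]
          exact_mod_cast abs_moebius_le_one
        calc ‖((μ d : ℤ) : ℂ)‖ * ((M / d : ℕ) : ℝ) ^ R / (M : ℝ) ^ R
            ≤ 1 * ((M / d : ℕ) : ℝ) ^ R / (M : ℝ) ^ R := by gcongr
          _ = ((M / d : ℕ) : ℝ) ^ R / (M : ℝ) ^ R := by rw [one_mul]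
          _ ≤ 1 / (d : ℝ) ^ R := by
              have hdpos : (0 : ℝ) < d := by exact_mod_cast Nat.pos_of_ne_zero (by omega)
              have hMpos : (0 : ℝ) < M := by
                exact_mod_cast Nat.pos_of_ne_zero (by omega)
              rw [div_le_div_iff₀ (pow_pos hMpos R) (pow_pos hdpos R), one_mul, ← mul_pow]
              gcongr
              exact_mod_cast Nat.div_mul_le_self M d
      · simp only [hF, if_neg hmem, norm_zero]
        positivity
  refine Tendsto.congr' ?_ key
  filter_upwards [eventually_ge_atTop 1] with M hM
  have htsum : ∑' d, F M d = ∑ d ∈ Finset.Icc 1 M, F M d :=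
    tsum_eq_sum (fun b hb => if_neg hb)
  rw [htsum]
  have hcount := aux_count R M hR0
  have hcast : ((((Fintype.piFinset (fun _ : Fin R => Finset.Icc 1 M)).filter
      (fun c => Finset.univ.gcd c = 1)).card : ℂ))
      = ∑ d ∈ Finset.Icc 1 M, ((μ d : ℤ) : ℂ) * ((M / d : ℕ) : ℂ) ^ R := by
    have h := congrArg (fun n : ℤ => (n : ℂ)) hcount
    push_cast at h ⊢
    exact h
  rw [hcast, Finset.sum_div]
  refine Finset.sum_congr rfl fun d hd => ?_
  simp only [hF]
  rw [if_pos hd]
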